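/- Let S be a finite set with |S| = n ≥ 3. For every permutation f of S, the number of permutations of S commuting with f is at least n−1. -/

import Mathlib

open Equiv Equiv.Perm Finset

private lemma sum_le_prod_of_two_le {ι : Type*} (s : Finset ι) (l : ι → ℕ)
    (h : ∀ i ∈ s, 2 ≤ l i) : s.sum l ≤ s.prod l := by
  classical
  induction s using Finset.induction_on with
  | empty => simp
  | @insert x s hx ih =>
    rw [Finset.sum_insert hx, Finset.prod_insert hx]
    have hx2 : 2 ≤ l x := h x (Finset.mem_insert_self _ _)
    have hs : s.sum l ≤ s.prod l := ih (fun i hi => h i (Finset.mem_insert_of_mem hi))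
    rcases Finset.eq_empty_or_nonempty s with rfl | ⟨i, hi⟩
    · simp
    · have h2 : 2 ≤ s.sum l := le_trans (h i (Finset.mem_insert_of_mem hi))
        (Finset.single_le_sum (fun j _ => Nat.zero_le _) hi)
      nlinarith

private lemma arith_aux (P s F : ℕ) (hPs : s ≤ P) (hs : s = 0 ∨ 2 ≤ s) (hP : 1 ≤ P) :
    s + F - 1 ≤ P * F.factorial := by
  have hFF : F ≤ F.factorial := Nat.self_le_factorial F
  rcases hs with rfl | hs2
  · simp only [Nat.zero_add]
    calc F - 1 ≤ F.factorial := le_trans (Nat.sub_le _ _) hFF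
      _ ≤ P * F.factorial := Nat.le_mul_of_pos_left _ hP
  · match F with
    | 0 => simpa using le_trans (Nat.sub_le _ _) hPs
    | 1 => simpa using hPs
    | (F+2) =>
      have h1 : (F+2) ≤ (F+2).factorial := Nat.self_le_factorial _
      have h2 : s * (F+2) ≤ P * (F+2).factorial :=
        Nat.mul_le_mul hPs h1
      have h3 : s + (F+2) ≤ s * (F+2) := by nlinarith
      omega

theorem centralizer_card_ge {S : Type*} [Fintype S] [DecidableEq S]
    (n : ℕ) (hn : 3 ≤ n) (hcard : Fintype.card S = n)
    (f : Equiv.Perm S) :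
    n - 1 ≤ Nat.card {g : Equiv.Perm S | f * g = g * f} := by
  classical
  set C := f.cycleFactorsFinset with hCdef
  -- basic facts about cycle factors
  have hcyc : ∀ c : {c // c ∈ C}, (c : Perm S).IsCycle :=
    fun c => (Equiv.Perm.mem_cycleFactorsFinset_iff.mp c.2).1
  have hsupp : ∀ c : {c // c ∈ C}, (c : Perm S).support ⊆ f.support :=
    fun c => Equiv.Perm.mem_cycleFactorsFinset_support_le c.2
  have hdisj : ∀ c d : {c // c ∈ C}, c ≠ d →
      _root_.Disjoint (c : Perm S).support (d : Perm S).support := by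
    intro c d hcd
    exact Equiv.Perm.disjoint_iff_disjoint_support.mp
      (f.cycleFactorsFinset_pairwise_disjoint c.2 d.2 (fun h => hcd (Subtype.ext h)))
  -- commuting criterion by supports
  have hcom : ∀ c d : {c // c ∈ C}, c ≠ d → ∀ x y : Perm S,
      x.support ⊆ (c : Perm S).support → y.support ⊆ (d : Perm S).support →
      Commute x y := by
    intro c d hcd x y hx hy
    exact Equiv.Perm.Disjoint.commute (Equiv.Perm.disjoint_iff_disjoint_support.mpr
      (Finset.disjoint_of_subset_left hx (Finset.disjoint_of_subset_right hy (hdisj c d hcd))))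
  -- the domain of the injection
  have hfixdec : DecidablePred (· ∈ Function.fixedPoints ⇑f) :=
    fun x => decidable_of_iff (f x = x) Iff.rfl
  -- the big product of powers of cycle factors
  have hpows : ∀ (a : ∀ c : {c // c ∈ C}, Fin (c : Perm S).support.card) (c : {c // c ∈ C}),
      ((c : Perm S) ^ ((a c : ℕ))).support ⊆ (c : Perm S).support :=
    fun a c => Equiv.Perm.support_pow_le _ _
  have hcommP : ∀ (a : ∀ c : {c // c ∈ C}, Fin (c : Perm S).support.card),
      (↑(Finset.univ : Finset {c // c ∈ C}) : Set {c // c ∈ C}).Pairwise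
        (Function.onFun Commute fun c => (c : Perm S) ^ ((a c : ℕ))) :=
    fun a c _ d _ hcd => hcom c d hcd _ _ (hpows a c) (hpows a d)
  set Pa : (∀ c : {c // c ∈ C}, Fin (c : Perm S).support.card) → Perm S :=
    fun a => Finset.univ.noncommProd (fun c : {c // c ∈ C} => (c : Perm S) ^ ((a c : ℕ)))
      (hcommP a) with hPadef
  have hdisjP : ∀ (a : ∀ c : {c // c ∈ C}, Fin (c : Perm S).support.card),
      (↑(Finset.univ : Finset {c // c ∈ C}) : Set {c // c ∈ C}).Pairwise
      (fun c d => Equiv.Perm.Disjoint ((c : Perm S) ^ ((a c : ℕ))) ((d : Perm S) ^ ((a d : ℕ)))) := by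
    intro a c _ d _ hcd
    exact Equiv.Perm.disjoint_iff_disjoint_support.mpr
      (Finset.disjoint_of_subset_left (hpows a c)
        (Finset.disjoint_of_subset_right (hpows a d) (hdisj c d hcd)))
  have hsuppPa : ∀ a, (Pa a).support ⊆ f.support := by
    intro a
    rw [hPadef]
    rw [Equiv.Perm.support_noncommProd (hdisjP a)]
    exact Finset.biUnion_subset.mpr (fun c _ => (hpows a c).trans (hsupp c))
  -- support of ofSubtype is in fixed points
  have hsuppOf : ∀ h : Perm (Function.fixedPoints ⇑f),
      ∀ x ∈ (Equiv.Perm.ofSubtype h).support, f x = x := by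
    intro h x hx
    by_contra hfx
    rw [Equiv.Perm.mem_support] at hx
    exact hx (Equiv.Perm.ofSubtype_apply_of_not_mem h hfx)
  -- the map
  set Φ : ((∀ c : {c // c ∈ C}, Fin (c : Perm S).support.card) ×
      Perm (Function.fixedPoints ⇑f)) → Perm S :=
    fun p => Pa p.1 * Equiv.Perm.ofSubtype p.2 with hΦdef
  have hmem : ∀ p, Φ p ∈ {g : Equiv.Perm S | f * g = g * f} := by
    intro p
    have h1 : Commute f (Pa p.1) := by
      apply Finset.noncommProd_commute
      intro c _
      exact ((Equiv.Perm.self_mem_cycle_factors_commute c.2).symm).pow_right _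
    have h2 : Commute f (Equiv.Perm.ofSubtype p.2) := by
      apply Equiv.Perm.Disjoint.commute
      intro x
      by_cases hx : f x = x
      · exact Or.inl hx
      · exact Or.inr (Equiv.Perm.ofSubtype_apply_of_not_mem p.2 hx)
    exact (h1.mul_right h2)
  have hinj : Function.Injective Φ := by
    intro ⟨a, h⟩ ⟨b, h'⟩ hpq
    simp only [hΦdef] at hpq
    have key : (Pa b)⁻¹ * Pa a = Equiv.Perm.ofSubtype h' * (Equiv.Perm.ofSubtype h)⁻¹ := by
      have := congrArg (fun z => (Pa b)⁻¹ * z * (Equiv.Perm.ofSubtype h)⁻¹) hpq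
      simpa [mul_assoc] using this
    have hone : (Pa b)⁻¹ * Pa a = 1 := by
      rw [← Equiv.Perm.support_eq_empty_iff]
      rw [← Finset.subset_empty]
      intro x hx
      have hxl : x ∈ f.support := by
        have := Equiv.Perm.support_mul_le ((Pa b)⁻¹) (Pa a) hx
        rw [Finset.sup_eq_union, Finset.mem_union, Equiv.Perm.support_inv] at this
        rcases this with h1 | h1
        · exact hsuppPa b h1
        · exact hsuppPa a h1
      have hxr : f x = x := by
        have := Equiv.Perm.support_mul_le (Equiv.Perm.ofSubtype h')
          ((Equiv.Perm.ofSubtype h)⁻¹) (key ▸ hx)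
        rw [Finset.sup_eq_union, Finset.mem_union, Equiv.Perm.support_inv] at this
        rcases this with h1 | h1
        · exact hsuppOf h' x h1
        · exact hsuppOf h x h1
      rw [Equiv.Perm.mem_support] at hxl
      exact absurd hxr hxl
    have hPab : Pa a = Pa b := by
      have := inv_mul_eq_one.mp hone
      exact this.symm
    have hofeq : Equiv.Perm.ofSubtype h' = Equiv.Perm.ofSubtype h := by
      have := key.symm.trans hone
      exact mul_inv_eq_one.mp this
    have hh : h = h' := by
      ext x
      have : Equiv.Perm.ofSubtype h' (x : S) = Equiv.Perm.ofSubtype h (x : S) := by rw [hofeq]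
      rw [Equiv.Perm.ofSubtype_apply_of_mem h' x.2, Equiv.Perm.ofSubtype_apply_of_mem h x.2]
        at this
      exact this.symm
    -- now extract a = b from Pa a = Pa b
    have hab : a = b := by
      -- family of quotients
      set w : {c // c ∈ C} → Perm S :=
        fun c => (c : Perm S) ^ ((a c : ℕ)) * ((c : Perm S) ^ ((b c : ℕ)))⁻¹ with hwdef
      have hsuppw : ∀ c, (w c).support ⊆ (c : Perm S).support := by
        intro c
        intro x hx
        have := Equiv.Perm.support_mul_le _ _ hx
        rw [Finset.sup_eq_union, Finset.mem_union, Equiv.Perm.support_inv] at this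
        rcases this with h1 | h1
        · exact hpows a c h1
        · exact hpows b c h1
      have comm_ww : (↑(Finset.univ : Finset {c // c ∈ C}) : Set {c // c ∈ C}).Pairwise
          (Function.onFun Commute w) := fun c _ d _ hcd => hcom c d hcd _ _ (hsuppw c) (hsuppw d)
      have comm_bb := hcommP b
      have comm_bw : (↑(Finset.univ : Finset {c // c ∈ C}) : Set {c // c ∈ C}).Pairwise
          (fun c d => Commute ((c : Perm S) ^ ((b c : ℕ))) (w d)) :=
        fun c _ d _ hcd => hcom c d hcd _ _ (hpows b c) (hsuppw d)
      have hsplit : Finset.univ.noncommProd (w * fun c : {c // c ∈ C} => (c : Perm S) ^ ((b c : ℕ)))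
            (Finset.noncommProd_mul_distrib_aux comm_ww comm_bb comm_bw) =
          Finset.univ.noncommProd w comm_ww * Pa b :=
        Finset.noncommProd_mul_distrib w _ comm_ww comm_bb comm_bw
      have hwb : Finset.univ.noncommProd (w * fun c : {c // c ∈ C} => (c : Perm S) ^ ((b c : ℕ)))
            (Finset.noncommProd_mul_distrib_aux comm_ww comm_bb comm_bw) = Pa a := by
        apply Finset.noncommProd_congr rfl
        intro c _
        simp only [Pi.mul_apply, hwdef, inv_mul_cancel_right]
      have hwone : Finset.univ.noncommProd w comm_ww = 1 := by
        have : Finset.univ.noncommProd w comm_ww * Pa b = Pa b := by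
          rw [← hsplit, hwb, hPab]
        exact mul_right_cancel (this.trans (one_mul (Pa b)).symm)
      have hdisjw : (↑(Finset.univ : Finset {c // c ∈ C}) : Set {c // c ∈ C}).Pairwise
          (fun c d => Equiv.Perm.Disjoint (w c) (w d)) := by
        intro c _ d _ hcd
        exact Equiv.Perm.disjoint_iff_disjoint_support.mpr
          (Finset.disjoint_of_subset_left (hsuppw c)
            (Finset.disjoint_of_subset_right (hsuppw d) (hdisj c d hcd)))
      have hweq1 : ∀ c, w c = 1 := by
        intro c
        rw [← Equiv.Perm.support_eq_empty_iff, ← Finset.subset_empty]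
        intro x hx
        have hxin : x ∈ (Finset.univ.biUnion fun c : {c // c ∈ C} => (w c).support) :=
          Finset.mem_biUnion.mpr ⟨c, Finset.mem_univ c, hx⟩
        rw [← Equiv.Perm.support_noncommProd hdisjw, hwone] at hxin
        simpa using hxin
      funext c
      have hpow : (c : Perm S) ^ ((a c : ℕ)) = (c : Perm S) ^ ((b c : ℕ)) :=
        mul_inv_eq_one.mp (hweq1 c)
      have hord : orderOf (c : Perm S) = (c : Perm S).support.card := (hcyc c).orderOf
      have := pow_injOn_Iio_orderOf (x := (c : Perm S))
        (by rw [hord]; exact Set.mem_Iio.mpr (a c).isLt)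
        (by rw [hord]; exact Set.mem_Iio.mpr (b c).isLt) hpow
      exact Fin.ext this
    exact Prod.ext hab hh
  -- counting
  have hle : Nat.card ((∀ c : {c // c ∈ C}, Fin (c : Perm S).support.card) ×
      Perm (Function.fixedPoints ⇑f)) ≤ Nat.card {g : Equiv.Perm S | f * g = g * f} :=
    Nat.card_le_card_of_injective (fun p => (⟨Φ p, hmem p⟩ : {g : Equiv.Perm S | f * g = g * f}))
      (fun p q hpq => hinj (congrArg Subtype.val hpq))
  have hcardD : Nat.card ((∀ c : {c // c ∈ C}, Fin (c : Perm S).support.card) ×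
      Perm (Function.fixedPoints ⇑f)) =
      (∏ c ∈ C, c.support.card) * (Nat.card (Function.fixedPoints ⇑f)).factorial := by
    rw [Nat.card_prod, Nat.card_pi]
    congr 1
    · rw [← Finset.prod_coe_sort C (fun c => c.support.card)]
      exact Finset.prod_congr rfl (fun c _ => Nat.card_eq_fintype_card.trans (Fintype.card_fin _))
    · simp only [Nat.card_eq_fintype_card, Fintype.card_perm]
  -- the sum of cycle lengths is the support cardinality
  have hsum : ∑ c ∈ C, c.support.card = f.support.card := by
    have h1 := Equiv.Perm.sum_cycleType f
    rw [Equiv.Perm.cycleType_def] at h1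
    exact h1
  have hFset : (Function.fixedPoints ⇑f : Set S) = ↑(f.supportᶜ) := by
    ext x
    simp [Function.fixedPoints, Function.IsFixedPt, Equiv.Perm.notMem_support]
  have hF : Nat.card (Function.fixedPoints ⇑f) = n - f.support.card := by
    rw [hFset, Nat.card_coe_set_eq, Set.ncard_coe_finset, Finset.card_compl, hcard]
  have hsle : f.support.card ≤ n := hcard ▸ Finset.card_le_univ _
  have htwo : ∀ c ∈ C, 2 ≤ c.support.card := fun c hc =>
    (Equiv.Perm.mem_cycleFactorsFinset_iff.mp hc).1.two_le_card_support
  have hprodge : ∑ c ∈ C, c.support.card ≤ ∏ c ∈ C, c.support.card :=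
    sum_le_prod_of_two_le C _ htwo
  have hP1 : 1 ≤ ∏ c ∈ C, c.support.card :=
    Finset.prod_pos (fun c hc => lt_of_lt_of_le (by norm_num) (htwo c hc))
  have hs0 : f.support.card = 0 ∨ 2 ≤ f.support.card := by
    rcases Finset.eq_empty_or_nonempty C with hCe | ⟨c, hc⟩
    · left
      rw [← hsum, hCe, Finset.sum_empty]
    · right
      rw [← hsum]
      exact le_trans (htwo c hc)
        (Finset.single_le_sum (f := fun c : Perm S => c.support.card)
          (fun j _ => Nat.zero_le _) hc)
  have harith := arith_aux (∏ c ∈ C, c.support.card) f.support.card (n - f.support.card)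
    (hsum ▸ hprodge) hs0 hP1
  rw [Nat.add_sub_cancel' hsle] at harith
  calc n - 1 ≤ (∏ c ∈ C, c.support.card) * (n - f.support.card).factorial := harith
    _ = _ := by rw [← hF, ← hcardD]
    _ ≤ Nat.card {g : Equiv.Perm S | f * g = g * f} := hle
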